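/- arXiv:1812.06277 — 9 statements merged into one kernel-verified Lean document; each statement's English description precedes it below -/
import Mathlib

section
/- Let T be a distributive lattice and S a generating subset of T. A prime ideal p of T is completely determined by its trace p ∩ S; that is, if p and q are prime ideals with p ∩ S = q ∩ S, then p = q. -/
/-- Closure of a subset of a bounded lattice under finite meets and joins
(including the empty meet `⊤` and the empty join `⊥`). -/
inductive LatticeGen {T : Type*} [Lattice T] [BoundedOrder T] (S : Set T) : T → Prop
  | base : ∀ x ∈ S, LatticeGen S x
  | top : LatticeGen S ⊤
  | bot : LatticeGen S ⊥
  | sup : ∀ {x y}, LatticeGen S x → LatticeGen S y → LatticeGen S (x ⊔ y)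
  | inf : ∀ {x y}, LatticeGen S x → LatticeGen S y → LatticeGen S (x ⊓ y)

/-- A prime ideal of a distributive lattice is determined by its trace on a
generating subset. -/
theorem primeIdeal_eq_of_trace_eq {T : Type*} [DistribLattice T] [BoundedOrder T]
    (S : Set T) (hS : ∀ t : T, LatticeGen S t)
    (p q : Order.Ideal T) (hp : p.IsPrime) (hq : q.IsPrime)
    (h : (p : Set T) ∩ S = (q : Set T) ∩ S) : p = q := by
  have key : ∀ x : T, LatticeGen S x → (x ∈ p ↔ x ∈ q) := by
    intro x hx
    induction hx with
    | base x hxS =>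
      constructor
      · intro hxp
        exact (h ▸ (Set.mem_inter hxp hxS) : x ∈ (q : Set T) ∩ S).1
      · intro hxq
        exact (h.symm ▸ (Set.mem_inter hxq hxS) : x ∈ (p : Set T) ∩ S).1
    | top =>
      have h1 : (⊤ : T) ∉ p := fun ht => hp.toIsProper.ne_univ (by
        ext z; simp [p.lower le_top ht])
      have h2 : (⊤ : T) ∉ q := fun ht => hq.toIsProper.ne_univ (by
        ext z; simp [q.lower le_top ht])
      simp [h1, h2]
    | bot => simp [p.bot_mem, q.bot_mem]
    | sup hx hy ihx ihy =>
      constructor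
      · intro hm
        exact q.sup_mem (ihx.mp (p.lower le_sup_left hm)) (ihy.mp (p.lower le_sup_right hm))
      · intro hm
        exact p.sup_mem (ihx.mpr (q.lower le_sup_left hm)) (ihy.mpr (q.lower le_sup_right hm))
    | inf hx hy ihx ihy =>
      constructor
      · intro hm
        rcases hp.mem_or_mem hm with h' | h'
        · exact q.lower inf_le_left (ihx.mp h')
        · exact q.lower inf_le_right (ihy.mp h')
      · intro hm
        rcases hq.mem_or_mem hm with h' | h'
        · exact p.lower inf_le_left (ihx.mpr h')
        · exact p.lower inf_le_right (ihy.mpr h')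
  exact Order.Ideal.ext (Set.ext fun x => key x (hS x))
end

section
/- For an ideal J of a distributive lattice T, the set J_T(J) = {a ∈ T | ∀ x ∈ T, a ∨ x = 1 → ∃ z ∈ J, z ∨ x = 1} is an ideal of T containing J. -/
/-- The Jacobson radical of an ideal of a distributive lattice is an ideal
containing it. -/
theorem jacobson_radical_isIdeal {T : Type*} [DistribLattice T] [BoundedOrder T]
    (J : Order.Ideal T) :
    ∃ K : Order.Ideal T,
      (K : Set T) = {a : T | ∀ x : T, a ⊔ x = ⊤ → ∃ z ∈ J, z ⊔ x = ⊤} ∧ J ≤ K := by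
  set S : Set T := {a : T | ∀ x : T, a ⊔ x = ⊤ → ∃ z ∈ J, z ⊔ x = ⊤} with hS
  have hmem : ∀ a ∈ (J : Set T), a ∈ S := by
    intro a ha x hx
    exact ⟨a, ha, hx⟩
  refine ⟨⟨⟨S, ?_⟩, ?_, ?_⟩, rfl, hmem⟩
  · -- lower set
    intro b a hab hb x hx
    exact hb x (top_le_iff.mp (hx ▸ sup_le_sup_right hab x))
  · obtain ⟨j, hj⟩ := J.nonempty
    exact ⟨j, hmem j hj⟩
  · intro a ha b hb
    refine ⟨a ⊔ b, ?_, le_sup_left, le_sup_right⟩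
    intro x hx
    rw [sup_assoc] at hx
    obtain ⟨z, hz, hzx⟩ := ha (b ⊔ x) hx
    have hzx' : b ⊔ (x ⊔ z) = ⊤ := by rw [← hzx]; ac_rfl
    obtain ⟨w, hw, hwx⟩ := hb (x ⊔ z) hzx'
    refine ⟨w ⊔ z, J.sup_mem hw hz, ?_⟩
    rw [← hwx]; ac_rfl
end

section
/- Let T be a distributive lattice, s₁, …, sₙ ∈ T, aᵢ = ↓sᵢ the corresponding principal ideals, and a = ⋂ᵢ aᵢ. If (x₁, …, xₙ) is a family in T such that for all i, j one has xᵢ ≡ xⱼ modulo the ideal aᵢ ∨ aⱼ, then there exists x ∈ T, unique modulo a, such that x ≡ xᵢ modulo aᵢ for each i. -/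
/-- Chinese remainder theorem for a distributive lattice and a finite family of
principal ideals `↓sᵢ` (Fact 1 / 1.5, item 1): a family compatible modulo the
ideals `↓(sᵢ ⊔ sⱼ)` glues to an element, unique modulo `⋂ᵢ ↓sᵢ = ↓(⨅ᵢ sᵢ)`. -/
theorem lattice_crt {T : Type*} [DistribLattice T] [BoundedOrder T] (n : ℕ)
    (s : Fin n → T) (x : Fin n → T)
    (hcomp : ∀ i j : Fin n, x i ⊔ (s i ⊔ s j) = x j ⊔ (s i ⊔ s j)) :
    ∃ y : T, (∀ i : Fin n, y ⊔ s i = x i ⊔ s i) ∧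
      ∀ y' : T, (∀ i : Fin n, y' ⊔ s i = x i ⊔ s i) →
        y' ⊔ Finset.univ.inf s = y ⊔ Finset.univ.inf s := by
  set y := Finset.univ.inf (fun i => x i ⊔ s i) with hy
  have key : ∀ j : Fin n, y ⊔ s j = x j ⊔ s j := by
    intro j
    rw [hy, Finset.inf_sup_distrib_right]
    have h1 : ∀ i : Fin n, (x i ⊔ s i) ⊔ s j = (x j ⊔ s j) ⊔ s i := by
      intro i
      calc (x i ⊔ s i) ⊔ s j = x i ⊔ (s i ⊔ s j) := by rw [sup_assoc]
        _ = x j ⊔ (s i ⊔ s j) := hcomp i j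
        _ = (x j ⊔ s j) ⊔ s i := by rw [sup_comm (s i), ← sup_assoc]
    simp only [h1]
    rw [← Finset.inf_sup_distrib_left]
    have hle : Finset.univ.inf s ≤ x j ⊔ s j :=
      (Finset.inf_le (Finset.mem_univ j)).trans le_sup_right
    exact sup_eq_left.mpr hle
  refine ⟨y, key, fun y' hy' => ?_⟩
  rw [Finset.inf_sup_distrib_left, Finset.inf_sup_distrib_left]
  exact Finset.inf_congr rfl fun i _ => by rw [hy' i, key i]
end

section
/- Let T be a distributive lattice and s₁, …, sₙ ∈ T with s₁ ∧ ⋯ ∧ sₙ = 0. Write Tᵢ = T/(sᵢ = 0) ≅ ↑sᵢ and Tᵢⱼ = T/(sᵢ ∨ sⱼ = 0), with canonical projections πᵢ : T → Tᵢ and πᵢⱼ : Tᵢ → Tᵢⱼ. Then (T, (πᵢ)) is the inverse limit of the diagram formed by the Tᵢ and Tᵢⱼ: the natural map from T to the subset of ∏ᵢ Tᵢ of compatible families is an isomorphism of lattices. -/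
/-- Fact 1 / 1.5, item 2: if the principal ideals `↓sᵢ` cover `T`
(i.e. `⨅ᵢ sᵢ = ⊥`), then `T`, with the quotient maps `πᵢ : x ↦ x ⊔ sᵢ`
onto `Tᵢ = ↑sᵢ ≅ T/(sᵢ = 0)`, is the inverse limit of the diagram of the `Tᵢ`
and `Tᵢⱼ`: it is order-isomorphic (hence lattice-isomorphic) to the set of
compatible families. -/
theorem lattice_inverse_limit {T : Type*} [DistribLattice T] [BoundedOrder T]
    (n : ℕ) (s : Fin n → T) (hcov : Finset.univ.inf s = ⊥) :
    ∃ e : T ≃o {f : Fin n → T // (∀ i, s i ≤ f i) ∧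
        ∀ i j : Fin n, f i ⊔ s j = f j ⊔ s i},
      ∀ (x : T) (i : Fin n), (e x : Fin n → T) i = x ⊔ s i := by
  have key : ∀ x : T, Finset.univ.inf (fun i => x ⊔ s i) = x := by
    intro x
    rw [← Finset.inf_sup_distrib_left]
    · rw [hcov, sup_bot_eq]
  refine ⟨{ toFun := fun x => ⟨fun i => x ⊔ s i, fun i => le_sup_right,
              fun i j => by rw [sup_assoc, sup_assoc, sup_comm (s i) (s j)]⟩
            invFun := fun f => Finset.univ.inf f.1
            left_inv := fun x => key x
            right_inv := ?_
            map_rel_iff' := ?_ }, fun x i => rfl⟩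
  · rintro ⟨f, hle, hcomp⟩
    ext i
    simp only
    rw [Finset.inf_sup_distrib_right]
    have : ∀ j ∈ Finset.univ, f j ⊔ s i = f i ⊔ s j := fun j _ => hcomp j i
    rw [Finset.inf_congr rfl this, ← Finset.inf_sup_distrib_left, hcov, sup_bot_eq]
  · intro x y
    simp only [Equiv.coe_fn_mk, Subtype.mk_le_mk]
    constructor
    · intro h
      calc x = Finset.univ.inf (fun i => x ⊔ s i) := (key x).symm
        _ ≤ Finset.univ.inf (fun i => y ⊔ s i) := Finset.inf_mono_fun fun i _ => h i
        _ = y := key y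
    · intro h i
      exact sup_le_sup_right h _
end

section
/- Let Γ be an abelian lattice-ordered group and a₁, …, aₙ, b₁, …, bₘ ∈ Γ with n, m ≥ 1. The entailment a₁, …, aₙ ⊢ b₁, …, bₘ holds in the linear lattice Liog(Γ) if and only if there exists k > 0 such that b₁⁻ ∧ ⋯ ∧ bₘ⁻ ≤ k·(a₁⁻ ∨ ⋯ ∨ aₙ⁻). -/
set_option linter.unusedSectionVars false

variable {Γ : Type*} [Lattice Γ] [AddCommGroup Γ] [CovariantClass Γ Γ (· + ·) (· ≤ ·)]

lemma llg_posPart_le (w w' : Γ) : w⁺ ≤ w'⁺ + |w - w'| := by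
  rw [posPart_def, posPart_def]
  refine sup_le ?_ (add_nonneg le_sup_right (abs_nonneg _))
  exact (sub_le_iff_le_add'.1 (le_abs_self (w - w'))).trans
    (add_le_add_left le_sup_left _)

lemma llg_abs_posPart_sub (w w' : Γ) : |w⁺ - w'⁺| ≤ |w - w'| := by
  refine abs_le'.2 ⟨sub_le_iff_le_add.2 ?_, ?_⟩
  · rw [add_comm]; exact llg_posPart_le w w'
  · rw [neg_sub]
    refine sub_le_iff_le_add.2 ?_
    rw [add_comm, ← abs_sub_comm]
    exact llg_posPart_le w' w

lemma llg_nsmul_inf_left {x y : Γ} (hx : 0 ≤ x) (hy : 0 ≤ y) (h : x ⊓ y = 0) (k : ℕ) :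
    (k • x) ⊓ y = 0 := by
  induction k with
  | zero => rw [zero_smul]; exact inf_eq_left.2 hy
  | succ n ih =>
    refine le_antisymm ?_ (le_inf (nsmul_nonneg hx _) hy)
    have h1 : (n + 1) • x ⊓ y ≤ n • x := by
      have : (n + 1) • x ⊓ y ≤ (n • x + x) ⊓ (n • x + y) := by
        refine inf_le_inf (le_of_eq (succ_nsmul x n)) (le_add_of_nonneg_left (nsmul_nonneg hx n))
      rw [← add_inf, h, add_zero] at this
      exact this
    calc (n + 1) • x ⊓ y ≤ (n • x) ⊓ y := le_inf h1 inf_le_right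
    _ = 0 := ih

lemma llg_nsmul_inf_nsmul {x y : Γ} (hx : 0 ≤ x) (hy : 0 ≤ y) (h : x ⊓ y = 0) (k : ℕ) :
    (k • x) ⊓ (k • y) = 0 := by
  have L1 : y ⊓ (k • x) = 0 := by rw [inf_comm]; exact llg_nsmul_inf_left hx hy h k
  have L2 := llg_nsmul_inf_left hy (nsmul_nonneg hx k) L1 k
  rw [inf_comm]; exact L2

lemma llg_inf_add_add {h₁ h₂ x y : Γ} (hh₁ : 0 ≤ h₁) (hh₂ : 0 ≤ h₂) :
    (h₁ + x) ⊓ (h₂ + y) ≤ h₁ + h₂ + (x ⊓ y) := by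
  have : (h₁ + x) ⊓ (h₂ + y) ≤ (h₁ + h₂ + x) ⊓ (h₁ + h₂ + y) :=
    inf_le_inf (add_le_add_left (le_add_of_nonneg_right hh₂) x)
      (add_le_add_left (le_add_of_nonneg_left hh₁) y)
  rwa [← add_inf] at this

lemma llg_exists_eq_inf' {G ι : Type*} [Lattice G] (htot : ∀ x y : G, x ≤ y ∨ y ≤ x)
    {s : Finset ι} (hs : s.Nonempty) (f : ι → G) : ∃ i ∈ s, s.inf' hs f = f i := by
  induction hs using Finset.Nonempty.cons_induction with
  | singleton a => exact ⟨a, Finset.mem_singleton_self a, Finset.inf'_singleton f⟩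
  | cons a s h hs ih =>
    rw [Finset.inf'_cons hs]
    obtain ⟨i, hi, hieq⟩ := ih
    rcases htot (f a) (s.inf' hs f) with hle | hle
    · exact ⟨a, Finset.mem_cons_self a s, inf_eq_left.2 hle⟩
    · exact ⟨i, Finset.mem_cons_of_mem hi, by rw [inf_eq_right.2 hle, hieq]⟩

section Quot
variable (M : AddSubgroup Γ)

lemma llg_mk_eq_mk {u v : Γ} : (u : Γ ⧸ M) = v ↔ u - v ∈ M := by
  rw [QuotientAddGroup.eq]
  have h : -u + v = -(u - v) := by abel
  rw [h, neg_mem_iff]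

/-- the order relation on the quotient -/
def llgQle (x y : Γ ⧸ M) : Prop := ∃ c : Γ, 0 ≤ c ∧ y = x + (c : Γ ⧸ M)

variable {M}
variable (hsolid : ∀ ⦃x y : Γ⦄, |x| ≤ |y| → y ∈ M → x ∈ M)
variable (hprime : ∀ z : Γ, z⁺ ∈ M ∨ z⁻ ∈ M)

include hsolid in
lemma llg_posPart_congr {p q : Γ} (h : p - q ∈ M) : p⁺ - q⁺ ∈ M :=
  hsolid (llg_abs_posPart_sub p q) h

include hsolid in
lemma llg_negPart_congr {p q : Γ} (h : p - q ∈ M) : p⁻ - q⁻ ∈ M := by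
  rw [← posPart_neg p, ← posPart_neg q]
  refine llg_posPart_congr hsolid ?_
  have : -p - -q = -(p - q) := by abel
  rw [this]
  exact neg_mem h

lemma llgQle_refl (x : Γ ⧸ M) : llgQle M x x := ⟨0, le_rfl, by simp⟩

lemma llgQle_trans {x y z : Γ ⧸ M} : llgQle M x y → llgQle M y z → llgQle M x z := by
  rintro ⟨c, hc, rfl⟩ ⟨d, hd, rfl⟩
  exact ⟨c + d, add_nonneg hc hd, by rw [QuotientAddGroup.mk_add, add_assoc]⟩

include hsolid in
lemma llgQle_antisymm {x y : Γ ⧸ M} : llgQle M x y → llgQle M y x → x = y := by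
  rintro ⟨c, hc, rfl⟩ ⟨d, hd, hx⟩
  rw [add_assoc] at hx
  have h0 : ((c : Γ) : Γ ⧸ M) + ↑d = 0 := left_eq_add.1 hx
  have hcd : c + d ∈ M := (QuotientAddGroup.eq_zero_iff _).1
    (by rw [QuotientAddGroup.mk_add]; exact h0)
  have hcM : c ∈ M := by
    refine hsolid ?_ hcd
    rw [abs_of_nonneg hc, abs_of_nonneg (add_nonneg hc hd)]
    exact le_add_of_nonneg_right hd
  have hc0 : ((c : Γ) : Γ ⧸ M) = 0 := (QuotientAddGroup.eq_zero_iff _).2 hcM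
  rw [hc0, add_zero]

lemma llgQle_of_negPart_mem {u v : Γ} (h : (v - u)⁻ ∈ M) : llgQle M ↑u ↑v := by
  refine ⟨(v - u)⁺, posPart_nonneg _, ?_⟩
  rw [← QuotientAddGroup.mk_add, llg_mk_eq_mk]
  have e1 : (v - u)⁺ - (v - u) = (v - u)⁻ := by
    rw [sub_eq_iff_eq_add, ← sub_eq_iff_eq_add']
    exact posPart_sub_negPart (v - u)
  have e2 : v - (u + (v - u)⁺) = -((v - u)⁺ - (v - u)) := by abel
  rw [e2, e1, neg_mem_iff]; exact h

include hsolid in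
lemma llgQle_iff {u v : Γ} : llgQle M ↑u ↑v ↔ (v - u)⁻ ∈ M := by
  refine ⟨?_, llgQle_of_negPart_mem⟩
  rintro ⟨c, hc, h⟩
  rw [← QuotientAddGroup.mk_add, llg_mk_eq_mk] at h
  have h' : (v - u) - c ∈ M := by
    have e : (v - u) - c = v - (u + c) := by abel
    rw [e]; exact h
  have h2 := llg_negPart_congr hsolid h'
  rwa [negPart_eq_zero.2 hc, sub_zero] at h2

include hprime in
lemma llgQle_total (x y : Γ ⧸ M) : llgQle M x y ∨ llgQle M y x := by
  induction x using QuotientAddGroup.induction_on with | H u =>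
  induction y using QuotientAddGroup.induction_on with | H v =>
  rcases hprime (v - u) with h | h
  · refine Or.inr (llgQle_of_negPart_mem ?_)
    have e : (u - v) = -(v - u) := by abel
    rw [e, negPart_neg]
    exact h
  · exact Or.inl (llgQle_of_negPart_mem h)

include hsolid in
lemma llg_mk_sup_of_le {u v : Γ} (h : llgQle M ↑u ↑v) : ((u ⊔ v : Γ) : Γ ⧸ M) = ↑v := by
  rw [llg_mk_eq_mk]
  have e : (u ⊔ v) - v = (u - v)⁺ := by rw [sup_sub, sub_self, posPart_def]
  have e2 : (u - v) = -(v - u) := by abel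
  rw [e, e2, posPart_neg]
  exact (llgQle_iff hsolid).1 h

include hsolid hprime in
/-- the lattice structure on the quotient -/
noncomputable def llgLattice : Lattice (Γ ⧸ M) := by
  classical
  exact
  { le := llgQle M
    le_refl := llgQle_refl
    le_trans := fun _ _ _ => llgQle_trans
    le_antisymm := fun _ _ => llgQle_antisymm hsolid
    sup := fun x y => if llgQle M x y then y else x
    le_sup_left := fun x y => by
      split_ifs with h; exacts [h, llgQle_refl x]
    le_sup_right := fun x y => by
      split_ifs with h
      exacts [llgQle_refl y, (llgQle_total hprime x y).resolve_left h]
    sup_le := fun x y z hx hy => by split_ifs with h; exacts [hy, hx]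
    inf := fun x y => if llgQle M x y then x else y
    inf_le_left := fun x y => by
      split_ifs with h
      exacts [llgQle_refl x, (llgQle_total hprime x y).resolve_left h]
    inf_le_right := fun x y => by split_ifs with h; exacts [h, llgQle_refl y]
    le_inf := fun x y z hx hy => by split_ifs with h; exacts [hx, hy] }

include hsolid hprime in
lemma llg_mk_sup (u v : Γ) :
    ((u ⊔ v : Γ) : Γ ⧸ M) = (llgLattice hsolid hprime).sup (u : Γ ⧸ M) v := by
  classical
  show _ = if llgQle M (u : Γ ⧸ M) ↑v then (v : Γ ⧸ M) else ↑u
  split_ifs with h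
  · exact llg_mk_sup_of_le hsolid h
  · have h' := (llgQle_total hprime ((u : Γ ⧸ M)) ↑v).resolve_left h
    rw [sup_comm]
    exact llg_mk_sup_of_le hsolid h'

include hsolid in
lemma llg_zero_qle_iff {w : Γ} : llgQle M 0 ↑w ↔ w⁻ ∈ M := by
  have h0 : ((0 : Γ) : Γ ⧸ M) = 0 := QuotientAddGroup.mk_zero _
  constructor
  · intro h
    have := (llgQle_iff hsolid (u := 0) (v := w)).1 (by rwa [h0])
    rwa [sub_zero] at this
  · intro h
    have := llgQle_of_negPart_mem (M := M) (u := 0) (v := w) (by rwa [sub_zero])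
    rwa [h0] at this

end Quot

/-- A solid subset: contains 0, closed under addition, and downward closed
for absolute values. -/
def llgSolidSet {Γ : Type*} [Lattice Γ] [AddCommGroup Γ] (H : Set Γ) : Prop :=
  0 ∈ H ∧ (∀ ⦃x y⦄, x ∈ H → y ∈ H → x + y ∈ H) ∧ (∀ ⦃x y⦄, |x| ≤ |y| → y ∈ H → x ∈ H)

/-- Formal Nullstellensatz for the linear lattice of an abelian ℓ-group:
the entailment `a₁, …, aₙ ⊢ b₁, …, bₘ` (validity in every linearly ordered
quotient, here expressed via lattice-group morphisms to linearly ordered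
abelian groups) holds iff `b₁⁻ ∧ ⋯ ∧ bₘ⁻ ≤ k·(a₁⁻ ∨ ⋯ ∨ aₙ⁻)` for some
`k > 0`. -/
theorem liog_formal_nullstellensatz {Γ : Type u} [Lattice Γ] [AddCommGroup Γ]
    [CovariantClass Γ Γ (· + ·) (· ≤ ·)] {n m : ℕ}
    (a : Fin (n + 1) → Γ) (b : Fin (m + 1) → Γ) :
    (∀ (G : Type u) (_ : Lattice G) (_ : AddCommGroup G)
        (_ : CovariantClass G G (· + ·) (· ≤ ·)) (_ : IsTotal G (· ≤ ·))
        (φ : Γ →+ G), (∀ x y : Γ, φ (x ⊔ y) = φ x ⊔ φ y) →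
        (∀ i, 0 ≤ φ (a i)) → ∃ j, 0 ≤ φ (b j)) ↔
      ∃ k : ℕ, 0 < k ∧
        Finset.univ.inf' Finset.univ_nonempty (fun j => (-(b j)) ⊔ 0) ≤
          k • Finset.univ.sup' Finset.univ_nonempty (fun i => (-(a i)) ⊔ 0) := by
  classical
  set A : Γ := Finset.univ.sup' Finset.univ_nonempty (fun i => (-(a i)) ⊔ 0) with hAdef
  set B : Γ := Finset.univ.inf' Finset.univ_nonempty (fun j => (-(b j)) ⊔ 0) with hBdef
  have hA0 : 0 ≤ A := by
    rw [hAdef]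
    exact le_sup_right.trans (Finset.le_sup' (fun i => (-(a i)) ⊔ 0) (Finset.mem_univ (0 : Fin (n+1))))
  have hB0 : 0 ≤ B := by
    rw [hBdef]
    exact Finset.le_inf' _ _ fun j _ => le_sup_right
  have hnegA : ∀ i, (a i)⁻ ≤ A := fun i => by
    rw [negPart_def, hAdef]; exact Finset.le_sup' (fun i => (-(a i)) ⊔ 0) (Finset.mem_univ i)
  have hnegB : ∀ j, B ≤ (b j)⁻ := fun j => by
    rw [negPart_def, hBdef]; exact Finset.inf'_le (fun j => (-(b j)) ⊔ 0) (Finset.mem_univ j)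
  constructor
  · -- hard direction
    intro hval
    by_contra hnot
    push_neg at hnot
    have hnot' : ∀ k : ℕ, 0 < k → ¬ B ≤ k • A := fun k hk hle => by
      obtain h := hnot k hk; exact h hle
    -- the family of solid sets containing A and avoiding B
    set S : Set (Set Γ) := {H | llgSolidSet H ∧ A ∈ H ∧ B ∉ H} with hSdef
    have hH₀ : {z : Γ | ∃ k : ℕ, |z| ≤ k • A} ∈ S := by
      refine ⟨⟨⟨0, by simp⟩, ?_, ?_⟩, ⟨1, by simp [abs_of_nonneg hA0]⟩, ?_⟩
      · rintro x y ⟨k₁, h₁⟩ ⟨k₂, h₂⟩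
        exact ⟨k₁ + k₂, (abs_add_le x y).trans (by rw [add_nsmul]; exact add_le_add h₁ h₂)⟩
      · rintro x y hxy ⟨k, hky⟩
        exact ⟨k, hxy.trans hky⟩
      · rintro ⟨k, hkB⟩
        rw [abs_of_nonneg hB0] at hkB
        rcases Nat.eq_zero_or_pos k with rfl | hk
        · rw [zero_smul] at hkB
          exact hnot' 1 one_pos (by rw [one_nsmul]; exact hkB.trans hA0)
        · exact hnot' k hk hkB
    have hub : ∀ c ⊆ S, IsChain (· ⊆ ·) c → c.Nonempty → ∃ ub ∈ S, ∀ s ∈ c, s ⊆ ub := by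
      intro c hcS hchain hcne
      obtain ⟨H1, hH1⟩ := hcne
      refine ⟨⋃₀ c, ⟨⟨⟨H1, hH1, (hcS hH1).1.1⟩, ?_, ?_⟩, ⟨H1, hH1, (hcS hH1).2.1⟩, ?_⟩,
        fun s hs => Set.subset_sUnion_of_mem hs⟩
      · rintro x y ⟨Hx, hHx, hxHx⟩ ⟨Hy, hHy, hyHy⟩
        rcases hchain.total hHx hHy with hsub | hsub
        · exact ⟨Hy, hHy, (hcS hHy).1.2.1 (hsub hxHx) hyHy⟩
        · exact ⟨Hx, hHx, (hcS hHx).1.2.1 hxHx (hsub hyHy)⟩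
      · rintro x y hxy ⟨Hy, hHy, hyHy⟩
        exact ⟨Hy, hHy, (hcS hHy).1.2.2 hxy hyHy⟩
      · rintro ⟨Hz, hHz, hBHz⟩
        exact (hcS hHz).2.2 hBHz
    obtain ⟨M0, -, hmax⟩ := zorn_subset_nonempty S hub _ hH₀
    obtain ⟨⟨hM0z, hM0add, hM0solid⟩, hAM0, hBM0⟩ := hmax.1
    -- key extension property
    have key : ∀ x : Γ, 0 ≤ x → x ∉ M0 → ∃ h ∈ M0, 0 ≤ h ∧ ∃ k : ℕ, B ≤ h + k • x := by
      intro x hx hxM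
      set C : Set Γ := {w : Γ | ∃ h ∈ M0, 0 ≤ h ∧ ∃ k : ℕ, |w| ≤ h + k • x} with hCdef
      have hMC : M0 ⊆ C := fun y hy =>
        ⟨|y|, hM0solid (le_of_eq (abs_abs y)) hy, abs_nonneg y, 0, by simp⟩
      have hxC : x ∈ C := ⟨0, hM0z, le_rfl, 1, by simp [abs_of_nonneg hx]⟩
      have hBC : B ∈ C := by
        by_contra hBC
        have hCS : C ∈ S := by
          refine ⟨⟨⟨0, hM0z, le_rfl, 0, by simp⟩, ?_, ?_⟩, hMC hAM0, hBC⟩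
          · rintro w₁ w₂ ⟨h₁, hh₁, hh₁0, k₁, hk₁⟩ ⟨h₂, hh₂, hh₂0, k₂, hk₂⟩
            refine ⟨h₁ + h₂, hM0add hh₁ hh₂, add_nonneg hh₁0 hh₂0, k₁ + k₂, ?_⟩
            calc |w₁ + w₂| ≤ |w₁| + |w₂| := abs_add_le w₁ w₂
              _ ≤ (h₁ + k₁ • x) + (h₂ + k₂ • x) := add_le_add hk₁ hk₂
              _ = h₁ + h₂ + (k₁ + k₂) • x := by rw [add_nsmul]; abel
          · rintro w₁ w₂ hw ⟨h₁, hh₁, hh₁0, k₁, hk₁⟩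
            exact ⟨h₁, hh₁, hh₁0, k₁, hw.trans hk₁⟩
        exact hxM ((hmax.2 hCS hMC) hxC)
      obtain ⟨h, hh, hh0, k, hk⟩ := hBC
      rw [abs_of_nonneg hB0] at hk
      exact ⟨h, hh, hh0, k, hk⟩
    -- primeness
    have hprime0 : ∀ z : Γ, z⁺ ∈ M0 ∨ z⁻ ∈ M0 := by
      intro z
      by_contra hzz
      push_neg at hzz
      obtain ⟨h₁, hh₁M, hh₁0, k₁, hk₁⟩ := key z⁺ (posPart_nonneg z) hzz.1
      obtain ⟨h₂, hh₂M, hh₂0, k₂, hk₂⟩ := key z⁻ (negPart_nonneg z) hzz.2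
      set k : ℕ := k₁ + k₂ with hkdef
      have hx1 : B ≤ h₁ + k • z⁺ := by
        refine hk₁.trans (add_le_add_right ?_ h₁)
        rw [hkdef, add_nsmul]
        exact le_add_of_nonneg_right (nsmul_nonneg (posPart_nonneg z) k₂)
      have hx2 : B ≤ h₂ + k • z⁻ := by
        refine hk₂.trans (add_le_add_right ?_ h₂)
        rw [hkdef, add_nsmul]
        exact le_add_of_nonneg_left (nsmul_nonneg (negPart_nonneg z) k₁)
      have hBle : B ≤ h₁ + h₂ := by
        calc B ≤ (h₁ + k • z⁺) ⊓ (h₂ + k • z⁻) := le_inf hx1 hx2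
          _ ≤ h₁ + h₂ + ((k • z⁺) ⊓ (k • z⁻)) := llg_inf_add_add hh₁0 hh₂0
          _ = h₁ + h₂ := by
            rw [llg_nsmul_inf_nsmul (posPart_nonneg z) (negPart_nonneg z)
              (posPart_inf_negPart_eq_zero z) k, add_zero]
      refine hBM0 (hM0solid ?_ (hM0add hh₁M hh₂M))
      rw [abs_of_nonneg hB0, abs_of_nonneg (add_nonneg hh₁0 hh₂0)]
      exact hBle
    -- build the quotient counterexample
    set Msub : AddSubgroup Γ :=
      { carrier := M0
        zero_mem' := hM0z
        add_mem' := fun hx hy => hM0add hx hy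
        neg_mem' := fun hx => hM0solid (le_of_eq (abs_neg _)) hx } with hMsubdef
    have hsolid' : ∀ ⦃x y : Γ⦄, |x| ≤ |y| → y ∈ Msub → x ∈ Msub := fun x y hxy hy =>
      hM0solid hxy hy
    have hprime' : ∀ z : Γ, z⁺ ∈ Msub ∨ z⁻ ∈ Msub := hprime0
    letI iL : Lattice (Γ ⧸ Msub) := llgLattice hsolid' hprime'
    letI iG : AddCommGroup (Γ ⧸ Msub) := inferInstance
    letI iC : CovariantClass (Γ ⧸ Msub) (Γ ⧸ Msub) (· + ·) (· ≤ ·) := by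
      refine ⟨fun x y z h => ?_⟩
      obtain ⟨c, hc, hz⟩ := h
      exact ⟨c, hc, by rw [hz, add_assoc]⟩
    letI iT : IsTotal (Γ ⧸ Msub) (· ≤ ·) := ⟨llgQle_total hprime'⟩
    set φ : Γ →+ Γ ⧸ Msub := QuotientAddGroup.mk' Msub with hφdef
    have hsupφ : ∀ x y : Γ, φ (x ⊔ y) = φ x ⊔ φ y := fun x y =>
      llg_mk_sup hsolid' hprime' x y
    have hAφ : ∀ i, 0 ≤ φ (a i) := by
      intro i
      show llgQle Msub 0 (a i : Γ ⧸ Msub)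
      refine (llg_zero_qle_iff hsolid').2 ?_
      refine hsolid' ?_ hAM0
      rw [abs_of_nonneg (negPart_nonneg _), abs_of_nonneg hA0]
      exact hnegA i
    obtain ⟨j, hj⟩ := hval (Γ ⧸ Msub) iL iG iC iT φ hsupφ hAφ
    have hbj : (b j)⁻ ∈ Msub := (llg_zero_qle_iff hsolid').1 hj
    refine hBM0 (hM0solid ?_ hbj)
    rw [abs_of_nonneg hB0, abs_of_nonneg (negPart_nonneg _)]
    exact hnegB j
  · -- easy direction
    rintro ⟨k, hk, hBA⟩ G iL iG iC iT φ hsup hA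
    have hmono : ∀ {x y : Γ}, x ≤ y → φ x ≤ φ y := by
      intro x y h
      have h2 := hsup x y
      rw [sup_eq_right.2 h] at h2
      exact le_sup_left.trans h2.ge
    have hinf : ∀ x y : Γ, φ (x ⊓ y) = φ x ⊓ φ y := by
      intro x y
      have e : x ⊓ y = -(-x ⊔ -y) := by rw [← neg_inf, neg_neg]
      rw [e, map_neg, hsup, map_neg, map_neg, neg_sup, neg_neg, neg_neg]
    have hφA : φ A = 0 := by
      rw [hAdef, Finset.comp_sup'_eq_sup'_comp _ φ hsup]
      have : ∀ i ∈ (Finset.univ : Finset (Fin (n+1))),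
          (φ ∘ fun i => (-(a i)) ⊔ 0) i = (0 : G) := by
        intro i _
        show φ ((-(a i)) ⊔ 0) = 0
        rw [hsup, map_neg, map_zero]
        exact sup_eq_right.2 (neg_nonpos.2 (hA i))
      rw [Finset.sup'_congr Finset.univ_nonempty rfl this, Finset.sup'_const]
    have hφB : φ B = Finset.univ.inf' Finset.univ_nonempty (fun j => (-(φ (b j))) ⊔ 0) := by
      rw [hBdef, Finset.apply_inf'_eq_inf'_comp _ φ hinf]
      refine Finset.inf'_congr Finset.univ_nonempty rfl ?_
      intro j _
      show φ ((-(b j)) ⊔ 0) = (-(φ (b j))) ⊔ 0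
      rw [hsup, map_neg, map_zero]
    have hle : φ B ≤ 0 := by
      have := hmono hBA
      rw [map_nsmul, hφA, smul_zero] at this
      exact this
    rw [hφB] at hle
    obtain ⟨j, -, hjeq⟩ := llg_exists_eq_inf' (fun x y => Std.Total.total x y)
      Finset.univ_nonempty (fun j => (-(φ (b j))) ⊔ 0)
    rw [hjeq] at hle
    exact ⟨j, neg_nonpos.1 (le_sup_left.trans hle)⟩
end

section
/- Let f : T → T' be a morphism of distributive lattices and suppose there is a map f̃ : T' → T such that for all a, c ∈ T and b ∈ T' one has f(a) ∧ b ≤ f(c) ↔ a ∧ f̃(b) ≤ c. Then: (a) b ≤ f(f̃(b)) for all b; (b) f̃(b₁ ∨ b₂) = f̃(b₁) ∨ f̃(b₂); (c) f̃(f(a) ∧ b) = a ∧ f̃(b); (d) f̃(f(a)) = f̃(1) ∧ a. -/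
/-- Theorem 8 / 3.5, implication 3 ⇒ 2: if `f̃` satisfies the adjoint-like
condition (2b), then it satisfies (2a), (2c) and (2d). -/
theorem open_map_adjoint_properties {T T' : Type*}
    [DistribLattice T] [BoundedOrder T] [DistribLattice T'] [BoundedOrder T']
    (f : BoundedLatticeHom T T') (ft : T' → T)
    (h2b : ∀ (a c : T) (b : T'), f a ⊓ b ≤ f c ↔ a ⊓ ft b ≤ c) :
    (∀ b : T', b ≤ f (ft b)) ∧
    (∀ b₁ b₂ : T', ft (b₁ ⊔ b₂) = ft b₁ ⊔ ft b₂) ∧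
    (∀ (a : T) (b : T'), ft (f a ⊓ b) = a ⊓ ft b) ∧
    (∀ a : T, ft (f a) = ft ⊤ ⊓ a) := by
  have gc : ∀ (b : T') (c : T), b ≤ f c ↔ ft b ≤ c := by
    intro b c
    have := h2b ⊤ c b
    simpa using this
  have h2a : ∀ b : T', b ≤ f (ft b) := fun b => (gc b (ft b)).mpr le_rfl
  have h2c : ∀ (a : T) (b : T'), ft (f a ⊓ b) = a ⊓ ft b := by
    intro a b
    apply le_antisymm
    · refine (gc _ _).mp ?_
      have : f a ⊓ b ≤ f a ⊓ f (ft b) :=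
        inf_le_inf_left _ (h2a b)
      simpa [map_inf] using this
    · exact (h2b a _ b).mp (h2a (f a ⊓ b))
  refine ⟨h2a, ?_, h2c, ?_⟩
  · intro b₁ b₂
    apply le_antisymm
    · refine (gc _ _).mp (sup_le ?_ ?_)
      · exact le_trans (h2a b₁) (by gcongr <;> simp)
      · exact le_trans (h2a b₂) (by gcongr <;> simp)
    · exact sup_le ((gc _ _).mp (le_trans le_sup_left (h2a _)))
        ((gc _ _).mp (le_trans le_sup_right (h2a _)))
  · intro a
    have := h2c a ⊤
    simpa [inf_comm] using this
end

section
/- In a distributive lattice T, if x ∨ y = 1 and there exist a, b with a ∨ x = 1, b ∨ y = 1, and a ∧ b = 0, then setting a₁ = a ∨ (x ∧ y) and b₁ = b ∨ (x ∧ y) one has a₁ ∨ x = 1, b₁ ∨ y = 1, and a₁ ∧ b₁ = x ∧ y. -/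
/-- Strengthening of the normality condition in a distributive lattice. -/
theorem normality_strengthening {T : Type*} [DistribLattice T] [BoundedOrder T]
    (x y a b : T) (hxy : x ⊔ y = ⊤) (hax : a ⊔ x = ⊤) (hby : b ⊔ y = ⊤)
    (hab : a ⊓ b = ⊥) :
    (a ⊔ (x ⊓ y)) ⊔ x = ⊤ ∧ (b ⊔ (x ⊓ y)) ⊔ y = ⊤ ∧
      (a ⊔ (x ⊓ y)) ⊓ (b ⊔ (x ⊓ y)) = x ⊓ y := by
  refine ⟨?_, ?_, ?_⟩
  · have h : (x ⊓ y) ⊔ x = x := sup_eq_right.mpr inf_le_left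
    rw [sup_assoc, h, hax]
  · have h : (x ⊓ y) ⊔ y = y := sup_eq_right.mpr inf_le_right
    rw [sup_assoc, h, hby]
  · rw [← sup_inf_right, hab, bot_sup_eq]
end

section
/- (Kronecker-Heitmann, dimension 1 case.) Let A be a commutative ring of Krull dimension ≤ 0 (for every a ∈ A there exist k ∈ ℕ and x ∈ A with a^k(1 − xa) = 0), and let b ∈ A. Then there exists x ∈ A such that for every a ∈ A, √⟨a, b⟩ = √⟨b + ax⟩. -/
private lemma kh_nil {A : Type*} [CommRing A] (b u : A) (k : ℕ)
    (h : b ^ (k + 1) * u = 0) : (b * u) ^ (k + 1) = 0 := by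
  rw [mul_pow, pow_succ u]
  linear_combination (u ^ k) * h

/-- Kronecker–Heitmann theorem, dimension-one case. -/
theorem kronecker_heitmann_dim_one {A : Type*} [CommRing A]
    (hdim : ∀ a : A, ∃ (k : ℕ) (x : A), a ^ k * (1 - x * a) = 0) (b : A) :
    ∃ x : A, ∀ a : A,
      (Ideal.span ({a, b} : Set A)).radical = (Ideal.span ({b + a * x} : Set A)).radical := by
  obtain ⟨k, x₀, h⟩ := hdim b
  -- bump the exponent so it is positive
  have hK : b ^ (k + 1) * (1 - x₀ * b) = 0 := by linear_combination b * h
  have hbe : ∀ m : ℕ, b ^ (k + 1) * (x₀ * b) ^ m = b ^ (k + 1) := by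
    intro m
    induction m with
    | zero => simp
    | succ m ih => linear_combination (x₀ * b) * ih - hK
  have he2' : (x₀ * b) ^ (k + 1) * (x₀ * b) ^ (k + 1) = (x₀ * b) ^ (k + 1) := by
    linear_combination (x₀ ^ (k + 1)) * hbe (k + 1)
  obtain ⟨e, he⟩ : ∃ e : A, e = (x₀ * b) ^ (k + 1) := ⟨_, rfl⟩
  have hbe' : b ^ (k + 1) * e = b ^ (k + 1) := by rw [he]; exact hbe (k + 1)
  have he2 : e * e = e := by rw [he]; exact he2'
  have h0 : b ^ (k + 1) * (1 - e) = 0 := by linear_combination -hbe'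
  have hnil : (b * (1 - e)) ^ (k + 1) = 0 := kh_nil b (1 - e) k h0
  refine ⟨1 - e, fun a => ?_⟩
  set c : A := b + a * (1 - e) with hc
  have hcmem : c ∈ Ideal.span ({a, b} : Set A) := by
    refine add_mem (Ideal.subset_span (by simp)) ?_
    exact Ideal.mul_mem_right _ _ (Ideal.subset_span (by simp))
  -- b ∈ radical span {c}
  have hbc : b ∈ (Ideal.span ({c} : Set A)).radical := by
    have h1 : b * e ∈ Ideal.span ({c} : Set A) := by
      rw [Ideal.mem_span_singleton]
      exact ⟨e, by rw [hc]; linear_combination a * he2⟩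
    have h2 : b * (1 - e) ∈ (Ideal.span ({c} : Set A)).radical :=
      ⟨k + 1, by rw [hnil]; exact zero_mem _⟩
    have hb' : b = b * e + b * (1 - e) := by ring
    rw [hb']
    exact add_mem (Ideal.le_radical h1) h2
  -- a ∈ radical span {c}
  have hac : a ∈ (Ideal.span ({c} : Set A)).radical := by
    have hcrad : c ∈ (Ideal.span ({c} : Set A)).radical :=
      Ideal.le_radical (Ideal.subset_span rfl)
    have hae : a * e ∈ (Ideal.span ({c} : Set A)).radical := by
      have h3 : a * e = (a * x₀ * (x₀ * b) ^ k) * b := by rw [he]; ring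
      rw [h3]
      exact Ideal.mul_mem_left _ _ hbc
    have ha' : a = (c - b) + a * e := by rw [hc]; ring
    rw [ha']
    exact add_mem (sub_mem hcrad hbc) hae
  apply le_antisymm
  · rw [Ideal.radical_le_radical_iff, Ideal.span_le]
    rintro y (rfl | rfl)
    · exact hac
    · exact hbc
  · exact Ideal.radical_mono (Ideal.span_le.mpr (by rintro y rfl; exact hcmem))
end

section
/- (Stable range from dimension 0.) Let A be a commutative ring of Krull dimension ≤ 0, i.e. for every a ∈ A there exist k ∈ ℕ and x ∈ A with a^k = x·a^{k+1}. If 1 ∈ ⟨a, a₁⟩ then there exists x₁ ∈ A with 1 ∈ ⟨a₁ + x₁·a⟩, i.e. a₁ + x₁·a is invertible. -/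
/-- Bass stable range theorem, n = 1 case, for zero-dimensional rings. -/
theorem stable_range_of_dim_zero {A : Type*} [CommRing A]
    (hdim : ∀ a : A, ∃ (k : ℕ) (x : A), a ^ k = x * a ^ (k + 1))
    (a a₁ : A) (h : (1 : A) ∈ Ideal.span ({a, a₁} : Set A)) :
    ∃ x₁ : A, IsUnit (a₁ + x₁ * a) := by
  obtain ⟨k, x, hk⟩ := hdim a
  -- bump exponent so it is positive
  have hk' : a ^ (k + 1) = x * a ^ (k + 2) := by
    calc a ^ (k + 1) = a * a ^ k := pow_succ' a k
    _ = a * (x * a ^ (k + 1)) := by rw [hk]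
    _ = x * a ^ (k + 2) := by rw [pow_succ' a (k + 1)]; ring
  set n : ℕ := k + 1 with hn
  -- key multiplicative identity
  have key : (x * a) * a ^ n = a ^ n := by
    have : a * a ^ n = a ^ (n + 1) := (pow_succ' a n).symm
    calc (x * a) * a ^ n = x * (a * a ^ n) := by ring
    _ = x * a ^ (n + 1) := by rw [this]
    _ = a ^ n := hk'.symm
  have habs : ∀ m : ℕ, (x * a) ^ m * a ^ n = a ^ n := by
    intro m
    induction m with
    | zero => simp
    | succ m ih =>
      calc (x * a) ^ (m + 1) * a ^ n = (x * a) ^ m * ((x * a) * a ^ n) := by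
            rw [pow_succ]; ring
      _ = (x * a) ^ m * a ^ n := by rw [key]
      _ = a ^ n := ih
  set E : A := x ^ n * a ^ n with hE
  have hea : E * a ^ n = a ^ n := by
    have := habs n
    rwa [mul_pow] at this
  have hee : E * E = E := by
    calc E * E = x ^ n * (E * a ^ n) := by rw [hE]; ring
    _ = x ^ n * a ^ n := by rw [hea]
    _ = E := rfl
  -- from 1 ∈ ⟨a, a₁⟩ get a Bezout identity, then raise it to a power
  rw [Ideal.mem_span_pair] at h
  obtain ⟨u, v, huv⟩ := h
  have H : ∀ m : ℕ, ∃ u' v' : A, u' * a ^ m + v' * a₁ = 1 := by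
    intro m
    induction m with
    | zero => exact ⟨1, 0, by simp⟩
    | succ m ih =>
      obtain ⟨u', v', ih⟩ := ih
      refine ⟨u' * u, u' * a ^ m * v + v' * (u * a + v * a₁), ?_⟩
      linear_combination (u * a + v * a₁) * ih + huv
  obtain ⟨u', v', hu⟩ := H n
  have h2 : v' * a₁ * (1 - E) = 1 - E := by
    linear_combination (1 - E) * hu + u' * hea
  -- the candidate element is a unit
  have hc : IsUnit (a₁ + (1 - a₁) * E) := by
    apply IsUnit.of_mul_eq_one (v' * (1 - E) + E)
    linear_combination h2 + (1 - v' + a₁ * v' - a₁) * hee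
  refine ⟨(1 - a₁) * (x ^ n * a ^ k), ?_⟩
  have : a₁ + (1 - a₁) * (x ^ n * a ^ k) * a = a₁ + (1 - a₁) * E := by
    rw [hE, hn, pow_succ]; ring
  rwa [this]
end
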